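/- arXiv:1410.2198 — 3 statements merged into one kernel-verified Lean document; each statement's English description precedes it below -/
import Mathlib

section
/- Let A_x be a digraph on 3 + 2k(ℓ+1) vertices consisting of: a directed cycle structure on vertices x_s, x, s_1, t_1, s_2, t_2, ..., s_{2k}, t_{2k}, x_t with arcs x_s→x, x→s_1, t_i→s_{i+1} for consecutive indexing along the absorbing route, arcs x_s→s_2, t_{2i}→s_{2i+2} and t_{2i-1}→s_{2i+1} skipping appropriately, arc t_{2k}→s_1, and arcs t_{2k-1}→x_t, t_{2k}→x_t as in the standard absorber construction; together with 2k pairwise vertex-disjoint directed paths P_i from s_i to t_i, each of length ℓ. Then A_x contains a directed path from x_s to x_t of length 3 + 2k(ℓ+1) - 1 passing through all vertices (including x), and a directed path from x_s to x_t of length 3 + 2k(ℓ+1) - 2 passing through all vertices except x. -/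
section Helpers

variable {V : Type*} (D : V → V → Bool) (ℓ : ℕ) (P : ℕ → ℕ → V)

/-- The `i`-th path segment, as a list of `ℓ+1` vertices. -/
def segL (i : ℕ) : List V := (List.range (ℓ+1)).map (P i)

lemma segL_ne_nil (i : ℕ) : segL ℓ P i ≠ [] := by simp [segL]

lemma segL_head (i : ℕ) : (segL ℓ P i).head? = some (P i 0) := by
  rw [segL, List.range_succ_eq_map]; simp

lemma segL_last (i : ℕ) : (segL ℓ P i).getLast? = some (P i ℓ) := by
  rw [segL, List.range_succ, List.map_append]; simp

lemma segL_mem (i : ℕ) (v : V) : v ∈ segL ℓ P i ↔ ∃ j ≤ ℓ, P i j = v := by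
  simp [segL, Nat.lt_succ_iff]

lemma segL_length (i : ℕ) : (segL ℓ P i).length = ℓ + 1 := by simp [segL]

/-- The concatenation of the segments indexed by `is`. -/
def bodyL (is : List ℕ) : List V := (is.map (segL ℓ P)).flatten

lemma bodyL_mem (is : List ℕ) (v : V) :
    v ∈ bodyL ℓ P is ↔ ∃ i ∈ is, ∃ j ≤ ℓ, P i j = v := by
  simp [bodyL, List.mem_flatten, segL_mem]

lemma bodyL_length (is : List ℕ) : (bodyL ℓ P is).length = is.length * (ℓ+1) := by
  rw [bodyL, List.length_flatten, List.map_map]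
  have : (List.length ∘ segL ℓ P) = Function.const ℕ (ℓ+1) := by
    funext i; simp [segL_length]
  rw [this, List.map_const, List.sum_replicate, smul_eq_mul]

lemma bodyL_head (is : List ℕ) :
    (bodyL ℓ P is).head? = is.head?.map (fun i => P i 0) := by
  cases is with
  | nil => simp [bodyL]
  | cons i is =>
      rw [bodyL, List.map_cons, List.flatten_cons, List.head?_append, segL_head]
      simp

lemma bodyL_last (is : List ℕ) :
    (bodyL ℓ P is).getLast? = is.getLast?.map (fun i => P i ℓ) := by
  induction is with
  | nil => simp [bodyL]
  | cons i is ih =>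
      rw [bodyL, List.map_cons, List.flatten_cons, List.getLast?_append, ← bodyL, ih,
        segL_last]
      cases is with
      | nil => simp
      | cons j js =>
          rw [List.getLast?_cons_cons]
          have : (j :: js).getLast? = some ((j :: js).getLast (by simp)) :=
            List.getLast?_eq_getLast _
          rw [this]; simp

lemma bodyL_chain' (is : List ℕ)
    (hseg : ∀ i ∈ is, ∀ j < ℓ, D (P i j) (P i (j+1)) = true)
    (hconn : is.Chain' (fun i i' => D (P i ℓ) (P i' 0) = true)) :
    (bodyL ℓ P is).Chain' (fun u v => D u v = true) := by
  rw [bodyL, List.Chain', List.isChain_flatten (by simp [segL_ne_nil])]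
  constructor
  · intro l hl
    rw [List.mem_map] at hl
    obtain ⟨i, hi, rfl⟩ := hl
    rw [segL, List.isChain_map, List.isChain_range_succ]
    exact fun m hm => hseg i hi m hm
  · rw [List.isChain_map]
    refine hconn.imp ?_
    intro i i' h u hu v hv
    rw [segL_last] at hu; rw [segL_head] at hv
    simp only [Option.mem_def, Option.some.injEq] at hu hv
    subst hu; subst hv; exact h

lemma bodyL_nodup (is : List ℕ) (hnd : is.Nodup)
    (hinj : ∀ i ∈ is, ∀ i' ∈ is, ∀ j ≤ ℓ, ∀ j' ≤ ℓ, P i j = P i' j' → i = i' ∧ j = j') :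
    (bodyL ℓ P is).Nodup := by
  rw [bodyL, List.nodup_flatten]
  constructor
  · intro l hl
    rw [List.mem_map] at hl
    obtain ⟨i, hi, rfl⟩ := hl
    refine List.Nodup.map_on ?_ List.nodup_range
    intro j hj j' hj' hjj'
    rw [List.mem_range, Nat.lt_succ_iff] at hj hj'
    exact (hinj i hi i hi j hj j' hj' hjj').2
  · rw [List.pairwise_map]
    refine (List.Pairwise.imp_of_mem ?_ hnd)
    intro i i' hi hi' hne v hv hv'
    rw [segL_mem] at hv hv'
    obtain ⟨j, hj, rfl⟩ := hv
    obtain ⟨j', hj', h⟩ := hv'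
    exact hne ((hinj i hi i' hi' j hj j' hj' h.symm).1)

lemma chain'_map_range {R : ℕ → ℕ → Prop} (f : ℕ → ℕ) (n : ℕ)
    (h : ∀ m, m + 1 < n → R (f m) (f (m+1))) :
    List.Chain' R ((List.range n).map f) := by
  rw [List.Chain', List.isChain_map]
  cases n with
  | zero => simp
  | succ n => rw [List.isChain_range_succ]; exact fun m hm => h m (by omega)

end Helpers

section Indices

/-- Index order for the absorbing path: `1, 2, …, 2k`. -/
def idxA (k : ℕ) : List ℕ := (List.range (2*k)).map (fun j => j+1)

/-- Even indices: `2, 4, …, 2k`. -/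
def idxE (k : ℕ) : List ℕ := (List.range k).map (fun j => 2*j+2)

/-- Odd indices: `1, 3, …, 2k-1`. -/
def idxO (k : ℕ) : List ℕ := (List.range k).map (fun j => 2*j+1)

lemma idxA_mem (k i : ℕ) : i ∈ idxA k ↔ 1 ≤ i ∧ i ≤ 2*k := by
  simp only [idxA, List.mem_map, List.mem_range]
  constructor
  · rintro ⟨j, hj, rfl⟩; omega
  · intro h; exact ⟨i - 1, by omega, by omega⟩

lemma idxEO_mem (k i : ℕ) : i ∈ idxE k ++ idxO k ↔ 1 ≤ i ∧ i ≤ 2*k := by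
  simp only [List.mem_append, idxE, idxO, List.mem_map, List.mem_range]
  constructor
  · rintro (⟨j, hj, rfl⟩ | ⟨j, hj, rfl⟩) <;> omega
  · rintro ⟨h1, h2⟩
    rcases Nat.even_or_odd i with ⟨c, hc⟩ | ⟨c, hc⟩
    · exact Or.inl ⟨c - 1, by omega, by omega⟩
    · exact Or.inr ⟨c, by omega, by omega⟩

lemma idxA_nodup (k : ℕ) : (idxA k).Nodup :=
  List.Nodup.map (fun a b h => by omega) List.nodup_range

lemma idxEO_nodup (k : ℕ) : (idxE k ++ idxO k).Nodup := by
  rw [List.nodup_append]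
  refine ⟨List.Nodup.map (fun a b h => by omega) List.nodup_range,
    List.Nodup.map (fun a b h => by omega) List.nodup_range, ?_⟩
  intro a ha b ha' hab
  simp only [idxE, idxO, List.mem_map, List.mem_range] at ha ha'
  obtain ⟨j, _, rfl⟩ := ha
  obtain ⟨j', _, h⟩ := ha'
  omega

lemma idxA_head (k : ℕ) (hk : 0 < k) : (idxA k).head? = some 1 := by
  obtain ⟨n, hn⟩ : ∃ n, 2*k = n + 1 := ⟨2*k - 1, by omega⟩
  rw [idxA, hn, List.range_succ_eq_map]; simp

lemma idxA_last (k : ℕ) (hk : 0 < k) : (idxA k).getLast? = some (2*k) := by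
  obtain ⟨n, hn⟩ : ∃ n, 2*k = n + 1 := ⟨2*k - 1, by omega⟩
  rw [idxA, hn, List.range_succ, List.map_append]; simp

lemma idxE_head (k : ℕ) (hk : 0 < k) : (idxE k).head? = some 2 := by
  obtain ⟨n, hn⟩ : ∃ n, k = n + 1 := ⟨k - 1, by omega⟩
  rw [idxE, hn, List.range_succ_eq_map]; simp

lemma idxE_last (k : ℕ) (hk : 0 < k) : (idxE k).getLast? = some (2*k) := by
  obtain ⟨n, hn⟩ : ∃ n, k = n + 1 := ⟨k - 1, by omega⟩
  subst hn
  rw [idxE, List.range_succ, List.map_append]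
  simp; omega

lemma idxO_head (k : ℕ) (hk : 0 < k) : (idxO k).head? = some 1 := by
  obtain ⟨n, hn⟩ : ∃ n, k = n + 1 := ⟨k - 1, by omega⟩
  rw [idxO, hn, List.range_succ_eq_map]; simp

lemma idxO_last (k : ℕ) (hk : 0 < k) : (idxO k).getLast? = some (2*k - 1) := by
  obtain ⟨n, hn⟩ : ∃ n, k = n + 1 := ⟨k - 1, by omega⟩
  subst hn
  rw [idxO, List.range_succ, List.map_append]
  simp; omega

lemma idxA_length (k : ℕ) : (idxA k).length = 2*k := by simp [idxA]

lemma idxEO_length (k : ℕ) : (idxE k ++ idxO k).length = 2*k := by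
  simp [idxE, idxO]; omega

end Indices

/-- A directed path in the digraph `D`: distinct vertices, consecutive arcs. -/
def IsDiPath {V : Type*} (D : V → V → Bool) (l : List V) : Prop :=
  l.Nodup ∧ l.Chain' (fun u v => D u v = true)

/-- The standard absorber structure (Figure 1 of the paper) contains an
absorbing path (through all of its `3 + 2k(ℓ+1)` vertices, including `x`) and a
non-absorbing path (through all vertices except `x`), both from `xs` to `xt`. -/
theorem stmt_1 {V : Type*} [DecidableEq V] (D : V → V → Bool) (k ℓ : ℕ) (hk : 0 < k)
    (xs x xt : V) (s t : ℕ → V) (P : ℕ → ℕ → V)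
    -- the 2k pairwise disjoint directed s_i t_i-paths of length ℓ
    (hPstart : ∀ i ∈ Finset.Icc 1 (2*k), P i 0 = s i)
    (hPend : ∀ i ∈ Finset.Icc 1 (2*k), P i ℓ = t i)
    (hPadj : ∀ i ∈ Finset.Icc 1 (2*k), ∀ j < ℓ, D (P i j) (P i (j+1)) = true)
    (hPinj : ∀ i ∈ Finset.Icc 1 (2*k), ∀ i' ∈ Finset.Icc 1 (2*k), ∀ j ≤ ℓ, ∀ j' ≤ ℓ,
      P i j = P i' j' → i = i' ∧ j = j')
    (hnew : ∀ i ∈ Finset.Icc 1 (2*k), ∀ j ≤ ℓ, P i j ≠ xs ∧ P i j ≠ x ∧ P i j ≠ xt)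
    (hdist : xs ≠ x ∧ xs ≠ xt ∧ x ≠ xt)
    -- the arcs of the cycle C
    (h1 : D xs x = true) (h2 : D x (s 1) = true)
    (h3 : ∀ i, 1 ≤ i → i < 2*k → D (t i) (s (i+1)) = true)
    (h4 : D xs (s 2) = true)
    (h5 : ∀ i, 1 ≤ i → 2*i + 2 ≤ 2*k → D (t (2*i)) (s (2*i+2)) = true)
    (h6 : ∀ i, 1 ≤ i → 2*i + 1 ≤ 2*k → D (t (2*i-1)) (s (2*i+1)) = true)
    (h7 : D (t (2*k)) (s 1) = true)
    (h8 : D (t (2*k-1)) xt = true) (h9 : D (t (2*k)) xt = true) :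
    ∃ l₁ l₂ : List V,
      -- the absorbing path: 3 + 2k(ℓ+1) vertices, i.e. length 3 + 2k(ℓ+1) - 1
      IsDiPath D l₁ ∧ l₁.head? = some xs ∧ l₁.getLast? = some xt ∧
      l₁.length = 3 + 2*k*(ℓ+1) ∧
      (∀ v, v ∈ l₁ ↔ (v = xs ∨ v = x ∨ v = xt ∨
        ∃ i ∈ Finset.Icc 1 (2*k), ∃ j ≤ ℓ, P i j = v)) ∧
      -- the non-absorbing path: all vertices except x
      IsDiPath D l₂ ∧ l₂.head? = some xs ∧ l₂.getLast? = some xt ∧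
      l₂.length = 3 + 2*k*(ℓ+1) - 1 ∧
      (∀ v, v ∈ l₂ ↔ (v = xs ∨ v = xt ∨
        ∃ i ∈ Finset.Icc 1 (2*k), ∃ j ≤ ℓ, P i j = v)) := by
  obtain ⟨hd1, hd2, hd3⟩ := hdist
  have hIcc : ∀ i, 1 ≤ i → i ≤ 2*k → i ∈ Finset.Icc 1 (2*k) :=
    fun i a b => Finset.mem_Icc.mpr ⟨a, b⟩
  have hA : ∀ i ∈ idxA k, i ∈ Finset.Icc 1 (2*k) := fun i hi => by
    obtain ⟨a, b⟩ := (idxA_mem k i).1 hi; exact hIcc i a b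
  have hEO : ∀ i ∈ idxE k ++ idxO k, i ∈ Finset.Icc 1 (2*k) := fun i hi => by
    obtain ⟨a, b⟩ := (idxEO_mem k i).1 hi; exact hIcc i a b
  set B1 := bodyL ℓ P (idxA k) with hB1
  set B2 := bodyL ℓ P (idxE k ++ idxO k) with hB2
  -- membership characterizations
  have hB1mem : ∀ v, v ∈ B1 ↔ ∃ i ∈ Finset.Icc 1 (2*k), ∃ j ≤ ℓ, P i j = v := by
    intro v; rw [hB1, bodyL_mem]
    constructor <;> rintro ⟨i, hi, hj⟩
    · exact ⟨i, hA i hi, hj⟩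
    · exact ⟨i, (idxA_mem k i).2 (Finset.mem_Icc.mp hi), hj⟩
  have hB2mem : ∀ v, v ∈ B2 ↔ ∃ i ∈ Finset.Icc 1 (2*k), ∃ j ≤ ℓ, P i j = v := by
    intro v; rw [hB2, bodyL_mem]
    constructor <;> rintro ⟨i, hi, hj⟩
    · exact ⟨i, hEO i hi, hj⟩
    · exact ⟨i, (idxEO_mem k i).2 (Finset.mem_Icc.mp hi), hj⟩
  have hnotB1 : ∀ v ∈ B1, v ≠ xs ∧ v ≠ x ∧ v ≠ xt := by
    intro v hv
    obtain ⟨i, hi, j, hj, rfl⟩ := (hB1mem v).1 hv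
    exact hnew i hi j hj
  have hnotB2 : ∀ v ∈ B2, v ≠ xs ∧ v ≠ x ∧ v ≠ xt := by
    intro v hv
    obtain ⟨i, hi, j, hj, rfl⟩ := (hB2mem v).1 hv
    exact hnew i hi j hj
  -- nodup
  have hB1nodup : B1.Nodup :=
    bodyL_nodup ℓ P _ (idxA_nodup k)
      (fun i hi i' hi' => hPinj i (hA i hi) i' (hA i' hi'))
  have hB2nodup : B2.Nodup :=
    bodyL_nodup ℓ P _ (idxEO_nodup k)
      (fun i hi i' hi' => hPinj i (hEO i hi) i' (hEO i' hi'))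
  -- chains
  have hB1chain : B1.Chain' (fun u v => D u v = true) := by
    refine bodyL_chain' D ℓ P _ (fun i hi => hPadj i (hA i hi)) ?_
    refine chain'_map_range _ _ ?_
    intro m hm
    rw [hPend (m+1) (hIcc _ (by omega) (by omega)),
        hPstart (m+1+1) (hIcc _ (by omega) (by omega))]
    exact h3 (m+1) (by omega) (by omega)
  have hB2chain : B2.Chain' (fun u v => D u v = true) := by
    refine bodyL_chain' D ℓ P _ (fun i hi => hPadj i (hEO i hi)) ?_
    rw [List.Chain', List.isChain_append]
    refine ⟨?_, ?_, ?_⟩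
    · refine chain'_map_range _ _ ?_
      intro m hm
      rw [hPend (2*m+2) (hIcc _ (by omega) (by omega)),
          hPstart (2*(m+1)+2) (hIcc _ (by omega) (by omega))]
      rw [show 2*m+2 = 2*(m+1) from by ring]
      exact h5 (m+1) (by omega) (by omega)
    · refine chain'_map_range _ _ ?_
      intro m hm
      rw [hPend (2*m+1) (hIcc _ (by omega) (by omega)),
          hPstart (2*(m+1)+1) (hIcc _ (by omega) (by omega))]
      rw [show 2*m+1 = 2*(m+1)-1 from by omega]
      exact h6 (m+1) (by omega) (by omega)
    · intro a ha b hb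
      rw [idxE_last k hk] at ha
      rw [idxO_head k hk] at hb
      simp only [Option.mem_def, Option.some.injEq] at ha hb
      subst ha; subst hb
      rw [hPend (2*k) (hIcc _ (by omega) (by omega)),
          hPstart 1 (hIcc _ (by omega) (by omega))]
      exact h7
  -- heads and lasts
  have hB1head : B1.head? = some (P 1 0) := by
    rw [hB1, bodyL_head, idxA_head k hk]; rfl
  have hB1last : B1.getLast? = some (P (2*k) ℓ) := by
    rw [hB1, bodyL_last, idxA_last k hk]; rfl
  have hB2head : B2.head? = some (P 2 0) := by
    rw [hB2, bodyL_head, List.head?_append, idxE_head k hk]; rfl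
  have hB2last : B2.getLast? = some (P (2*k-1) ℓ) := by
    rw [hB2, bodyL_last, List.getLast?_append, idxO_last k hk]; rfl
  -- lengths
  have hB1len : B1.length = 2*k*(ℓ+1) := by
    rw [hB1, bodyL_length, idxA_length]
  have hB2len : B2.length = 2*k*(ℓ+1) := by
    rw [hB2, bodyL_length, idxEO_length]
  refine ⟨(xs :: x :: B1) ++ [xt], (xs :: B2) ++ [xt], ⟨?_, ?_⟩, rfl,
    List.getLast?_concat, ?_, ?_, ⟨?_, ?_⟩, rfl, List.getLast?_concat, ?_, ?_⟩
  · -- Nodup l₁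
    rw [List.nodup_append]
    refine ⟨?_, List.nodup_singleton _, ?_⟩
    · rw [List.nodup_cons, List.nodup_cons]
      refine ⟨?_, fun h => (hnotB1 _ h).2.1 rfl, hB1nodup⟩
      intro hmem
      rcases List.mem_cons.mp hmem with h | h
      · exact hd1 h
      · exact (hnotB1 _ h).1 rfl
    · intro a ha b hb hab
      rw [List.mem_singleton] at hb
      subst hab; subst hb
      simp only [List.mem_cons] at ha
      rcases ha with h | h | h
      · exact hd2 h.symm
      · exact hd3 h.symm
      · exact (hnotB1 _ h).2.2 rfl
  · -- Chain' l₁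
    rw [List.Chain', List.isChain_append]
    refine ⟨?_, List.isChain_singleton _, ?_⟩
    · rw [List.isChain_cons_cons, List.isChain_cons]
      refine ⟨h1, ?_, hB1chain⟩
      intro y hy
      rw [hB1head] at hy
      simp only [Option.mem_def, Option.some.injEq] at hy
      subst hy
      rw [hPstart 1 (hIcc _ (by omega) (by omega))]
      exact h2
    · intro a ha b hb
      have he : xs :: x :: B1 = [xs, x] ++ B1 := rfl
      rw [he, List.getLast?_append, hB1last] at ha
      simp only [Option.some_or, Option.mem_def, Option.some.injEq] at ha
      simp only [List.head?_cons, Option.mem_def, Option.some.injEq] at hb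
      subst ha; subst hb
      rw [hPend (2*k) (hIcc _ (by omega) (by omega))]
      exact h9
  · -- length l₁
    rw [List.length_append, List.length_cons, List.length_cons, hB1len,
      List.length_singleton]
    ring
  · -- membership l₁
    intro v
    simp only [List.mem_append, List.mem_cons, List.mem_singleton,
      List.not_mem_nil, or_false]
    rw [hB1mem v]
    constructor
    · rintro ((h | h | h) | h)
      · exact Or.inl h
      · exact Or.inr (Or.inl h)
      · exact Or.inr (Or.inr (Or.inr h))
      · exact Or.inr (Or.inr (Or.inl h))
    · rintro (h | h | h | h)
      · exact Or.inl (Or.inl h)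
      · exact Or.inl (Or.inr (Or.inl h))
      · exact Or.inr h
      · exact Or.inl (Or.inr (Or.inr h))
  · -- Nodup l₂
    rw [List.nodup_append]
    refine ⟨?_, List.nodup_singleton _, ?_⟩
    · rw [List.nodup_cons]
      exact ⟨fun h => (hnotB2 _ h).1 rfl, hB2nodup⟩
    · intro a ha b hb hab
      rw [List.mem_singleton] at hb
      subst hab; subst hb
      simp only [List.mem_cons] at ha
      rcases ha with h | h
      · exact hd2 h.symm
      · exact (hnotB2 _ h).2.2 rfl
  · -- Chain' l₂
    rw [List.Chain', List.isChain_append]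
    refine ⟨?_, List.isChain_singleton _, ?_⟩
    · rw [List.isChain_cons]
      refine ⟨?_, hB2chain⟩
      intro y hy
      rw [hB2head] at hy
      simp only [Option.mem_def, Option.some.injEq] at hy
      subst hy
      rw [hPstart 2 (hIcc _ (by omega) (by omega))]
      exact h4
    · intro a ha b hb
      have he : xs :: B2 = [xs] ++ B2 := rfl
      rw [he, List.getLast?_append, hB2last] at ha
      simp only [Option.some_or, Option.mem_def, Option.some.injEq] at ha
      simp only [List.head?_cons, Option.mem_def, Option.some.injEq] at hb
      subst ha; subst hb
      rw [hPend (2*k-1) (hIcc _ (by omega) (by omega))]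
      exact h8
  · -- length l₂
    rw [List.length_append, List.length_cons, hB2len, List.length_singleton]
    omega
  · -- membership l₂
    intro v
    simp only [List.mem_append, List.mem_cons, List.mem_singleton,
      List.not_mem_nil, or_false]
    rw [hB2mem v]
    constructor
    · rintro ((h | h) | h)
      · exact Or.inl h
      · exact Or.inr (Or.inr h)
      · exact Or.inr (Or.inl h)
    · rintro (h | h | h)
      · exact Or.inl (Or.inl h)
      · exact Or.inr h
      · exact Or.inl (Or.inr h)
end

section
/- Let p = ω((log n)^8/n) and G ~ D(n,p). Then with high probability, for every set X ⊆ V(G) of size |X| ≤ (log n)^2/p, the number of arcs of G with both endpoints in X is at most |X|·(log n)^{2.1}. -/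
set_option maxHeartbeats 1000000

open Filter MeasureTheory

/-- The random digraph `D(n, p)`: each ordered pair is an arc independently with
probability `p` (diagonal coordinates are present in the sample space but are
ignored: an arc is a pair `(v, w)` with `v ≠ w` and `G v w = true`). -/
noncomputable def digraphMeasure (n : ℕ) (p : ℝ) : Measure (Fin n → Fin n → Bool) :=
  Measure.pi fun _ => Measure.pi fun _ =>
    (PMF.bernoulli (min (Real.toNNReal p) 1) (min_le_right _ _)).toMeasure

/-- The number of arcs with both endpoints in `X`. -/
def arcsIn {n : ℕ} (G : Fin n → Fin n → Bool) (X : Finset (Fin n)) : ℕ :=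
  ((X ×ˢ X).filter fun e => e.1 ≠ e.2 ∧ G e.1 e.2 = true).card

section Aux

/-- weight of a single coordinate -/
private noncomputable def wgt (p : ℝ) (b : Bool) : ENNReal :=
  if b then ENNReal.ofReal p else 1 - ENNReal.ofReal p

private def cnt {n : ℕ} (X : Finset (Fin n)) (i j : Fin n) (b : Bool) : ℕ :=
  if i ∈ X ∧ j ∈ X ∧ i ≠ j ∧ b = true then 1 else 0

private lemma meas_singleton {n : ℕ} {p : ℝ} (hp1 : p ≤ 1) (G : Fin n → Fin n → Bool) :
    digraphMeasure n p {G} = ∏ i, ∏ j, wgt p (G i j) := by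
  have hb : ∀ b : Bool,
      ((PMF.bernoulli (min (Real.toNNReal p) 1) (min_le_right _ _)).toMeasure) {b} = wgt p b := by
    intro b
    rw [PMF.toMeasure_apply_singleton _ _ (measurableSet_singleton b), PMF.bernoulli_apply,
      min_eq_left (Real.toNNReal_le_one.2 hp1)]
    cases b <;> simp [wgt, ENNReal.ofReal]
  have hrow : ∀ g : Fin n → Bool,
      (Measure.pi fun _ : Fin n =>
        (PMF.bernoulli (min (Real.toNNReal p) 1) (min_le_right _ _)).toMeasure) {g}
        = ∏ j, wgt p (g j) := by
    intro g
    rw [← Set.univ_pi_singleton g, Measure.pi_pi]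
    exact Finset.prod_congr rfl fun j _ => hb (g j)
  rw [digraphMeasure, ← Set.univ_pi_singleton G, Measure.pi_pi]
  exact Finset.prod_congr rfl fun i _ => hrow (G i)

private lemma meas_apply {n : ℕ} {p : ℝ} (hp1 : p ≤ 1) (s : Set (Fin n → Fin n → Bool)) :
    digraphMeasure n p s = ∑ G ∈ s.toFinite.toFinset, ∏ i, ∏ j, wgt p (G i j) := by
  have h1 : s = ⋃ G ∈ s.toFinite.toFinset, {G} := by
    ext x; simp
  nth_rewrite 1 [h1]
  rw [measure_biUnion_finset]
  · exact Finset.sum_congr rfl fun G _ => meas_singleton hp1 G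
  · intro x _ y _ hxy
    simp [Function.onFun, Set.disjoint_singleton, hxy]
  · exact fun b _ => measurableSet_singleton b

private lemma swap1 {ι α : Type*} [Fintype ι] [DecidableEq ι] [Fintype α]
    (F : ι → α → ENNReal) :
    ∑ g : ι → α, ∏ i, F i (g i) = ∏ i, ∑ b, F i b := by
  rw [Finset.prod_univ_sum (fun _ => (Finset.univ : Finset α)) F, Fintype.piFinset_univ]

private lemma swap2 {n : ℕ} (F : Fin n → Fin n → Bool → ENNReal) :
    ∑ G : Fin n → Fin n → Bool, ∏ i, ∏ j, F i j (G i j) = ∏ i, ∏ j, ∑ b, F i j b := by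
  have h1 := swap1 (ι := Fin n) (α := Fin n → Bool) (fun i g => ∏ j, F i j (g j))
  rw [h1]
  exact Finset.prod_congr rfl fun i _ => swap1 _

private lemma arcsIn_eq_sum {n : ℕ} (G : Fin n → Fin n → Bool) (X : Finset (Fin n)) :
    arcsIn G X = ∑ i, ∑ j, cnt X i j (G i j) := by
  classical
  have hsub : X ×ˢ X ⊆ Finset.univ ×ˢ Finset.univ := by
    rw [Finset.univ_product_univ]; exact Finset.subset_univ _
  calc arcsIn G X
      = ∑ e ∈ X ×ˢ X, (if e.1 ≠ e.2 ∧ G e.1 e.2 = true then 1 else 0) := by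
        rw [arcsIn, Finset.card_filter]
    _ = ∑ e ∈ X ×ˢ X, cnt X e.1 e.2 (G e.1 e.2) := by
        refine Finset.sum_congr rfl fun e he => ?_
        rcases Finset.mem_product.1 he with ⟨h1, h2⟩
        simp [cnt, h1, h2]
    _ = ∑ e ∈ Finset.univ ×ˢ Finset.univ, cnt X e.1 e.2 (G e.1 e.2) := by
        refine Finset.sum_subset hsub fun e _ he => ?_
        rw [cnt, if_neg]
        intro h
        exact he (Finset.mem_product.2 ⟨h.1, h.2.1⟩)
    _ = ∑ i, ∑ j, cnt X i j (G i j) :=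
        Finset.sum_product' Finset.univ Finset.univ (fun i j => cnt X i j (G i j))

private lemma mgf_le {n : ℕ} {p : ℝ} (hp0 : 0 ≤ p) (hp1 : p ≤ 1) (X : Finset (Fin n)) :
    ∑ G : Fin n → Fin n → Bool,
        (∏ i, ∏ j, wgt p (G i j)) * ENNReal.ofReal (Real.exp 1) ^ arcsIn G X
      ≤ ENNReal.ofReal (Real.exp (2 * p * (X.card : ℝ) ^ 2)) := by
  classical
  set q := ENNReal.ofReal p with hq
  set E := ENNReal.ofReal (Real.exp 1) with hE
  have hq1 : q ≤ 1 := ENNReal.ofReal_le_one.2 hp1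
  have hE1 : (1 : ENNReal) ≤ E := ENNReal.one_le_ofReal.2 (Real.one_le_exp zero_le_one)
  have h1 : ∀ G : Fin n → Fin n → Bool,
      (∏ i, ∏ j, wgt p (G i j)) * E ^ arcsIn G X
        = ∏ i, ∏ j, (wgt p (G i j) * E ^ cnt X i j (G i j)) := by
    intro G
    calc (∏ i, ∏ j, wgt p (G i j)) * E ^ arcsIn G X
        = (∏ i, ∏ j, wgt p (G i j)) * E ^ (∑ i, ∑ j, cnt X i j (G i j)) := by
          rw [arcsIn_eq_sum]
      _ = (∏ i, ∏ j, wgt p (G i j)) * ∏ i, E ^ (∑ j, cnt X i j (G i j)) := by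
          rw [Finset.prod_pow_eq_pow_sum]
      _ = (∏ i, ∏ j, wgt p (G i j)) * ∏ i, ∏ j, E ^ cnt X i j (G i j) := by
          congr 1
          exact Finset.prod_congr rfl fun i _ => (Finset.prod_pow_eq_pow_sum _ _ _).symm
      _ = ∏ i, ((∏ j, wgt p (G i j)) * ∏ j, E ^ cnt X i j (G i j)) :=
          (Finset.prod_mul_distrib).symm
      _ = ∏ i, ∏ j, (wgt p (G i j) * E ^ cnt X i j (G i j)) :=
          Finset.prod_congr rfl fun i _ => (Finset.prod_mul_distrib).symm
  have h3 : ∀ i j : Fin n, (∑ b, wgt p b * E ^ cnt X i j b)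
      = if i ∈ X ∧ j ∈ X ∧ i ≠ j then (1 - q) + q * E else 1 := by
    intro i j
    rw [Fintype.sum_bool]
    have hf : cnt X i j false = 0 := by simp [cnt]
    by_cases h : i ∈ X ∧ j ∈ X ∧ i ≠ j
    · have ht : cnt X i j true = 1 := by simp [cnt, h]
      rw [ht, hf, if_pos h, pow_one, pow_zero, mul_one]
      have hwt : wgt p true = q := by simp [wgt, hq]
      have hwf : wgt p false = 1 - q := by simp [wgt, hq]
      rw [hwt, hwf, add_comm]
    · have ht : cnt X i j true = 0 := by simp [cnt, h]
      rw [ht, hf, if_neg h, pow_zero, mul_one, mul_one]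
      have hwt : wgt p true = q := by simp [wgt, hq]
      have hwf : wgt p false = 1 - q := by simp [wgt, hq]
      rw [hwt, hwf, add_comm, tsub_add_cancel_of_le hq1]
  have h4 : (∏ i : Fin n, ∏ j : Fin n, if i ∈ X ∧ j ∈ X ∧ i ≠ j then (1 - q) + q * E else 1)
      = ((1 - q) + q * E) ^
        ((Finset.univ ×ˢ Finset.univ).filter
          (fun e : Fin n × Fin n => e.1 ∈ X ∧ e.2 ∈ X ∧ e.1 ≠ e.2)).card := by
    rw [← Finset.prod_product', ← Finset.prod_const, Finset.prod_filter]
  have h5 : ((Finset.univ ×ˢ Finset.univ).filter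
        (fun e : Fin n × Fin n => e.1 ∈ X ∧ e.2 ∈ X ∧ e.1 ≠ e.2)).card ≤ X.card * X.card := by
    calc ((Finset.univ ×ˢ Finset.univ).filter
          (fun e : Fin n × Fin n => e.1 ∈ X ∧ e.2 ∈ X ∧ e.1 ≠ e.2)).card
        ≤ (X ×ˢ X).card := by
          apply Finset.card_le_card
          intro e he
          rcases Finset.mem_filter.1 he with ⟨-, h1, h2, -⟩
          exact Finset.mem_product.2 ⟨h1, h2⟩
      _ = X.card * X.card := Finset.card_product _ _
  have hbase1 : (1 : ENNReal) ≤ (1 - q) + q * E := by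
    calc (1 : ENNReal) = (1 - q) + q := (tsub_add_cancel_of_le hq1).symm
      _ ≤ (1 - q) + q * E := by
          apply add_le_add_right
          calc q = q * 1 := (mul_one q).symm
            _ ≤ q * E := mul_le_mul_right hE1 q
  have hbase2 : (1 - q) + q * E ≤ ENNReal.ofReal (Real.exp (2 * p)) := by
    have hsub : (1 : ENNReal) - q = ENNReal.ofReal (1 - p) := by
      rw [hq, ENNReal.ofReal_sub 1 hp0, ENNReal.ofReal_one]
    rw [hsub, hq, hE, ← ENNReal.ofReal_mul hp0,
      ← ENNReal.ofReal_add (by linarith) (by positivity)]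
    apply ENNReal.ofReal_le_ofReal
    have he3 : Real.exp 1 ≤ 3 := by
      have := Real.exp_one_lt_d9; linarith
    calc 1 - p + p * Real.exp 1 = p * (Real.exp 1 - 1) + 1 := by ring
      _ ≤ Real.exp (p * (Real.exp 1 - 1)) := Real.add_one_le_exp _
      _ ≤ Real.exp (2 * p) := Real.exp_le_exp.2 (by nlinarith)
  have hswap := swap2 (fun i j b => wgt p b * E ^ cnt X i j b)
  calc ∑ G : Fin n → Fin n → Bool, (∏ i, ∏ j, wgt p (G i j)) * E ^ arcsIn G X
      = ∑ G : Fin n → Fin n → Bool, ∏ i, ∏ j, (wgt p (G i j) * E ^ cnt X i j (G i j)) :=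
        Finset.sum_congr rfl fun G _ => h1 G
    _ = ∏ i, ∏ j, ∑ b, wgt p b * E ^ cnt X i j b := hswap
    _ = ((1 - q) + q * E) ^
        ((Finset.univ ×ˢ Finset.univ).filter
          (fun e : Fin n × Fin n => e.1 ∈ X ∧ e.2 ∈ X ∧ e.1 ≠ e.2)).card := by
        rw [← h4]
        exact Finset.prod_congr rfl fun i _ => Finset.prod_congr rfl fun j _ => h3 i j
    _ ≤ ((1 - q) + q * E) ^ (X.card * X.card) := pow_le_pow_right' hbase1 h5
    _ ≤ (ENNReal.ofReal (Real.exp (2 * p))) ^ (X.card * X.card) := pow_le_pow_left' hbase2 _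
    _ = ENNReal.ofReal (Real.exp (2 * p * (X.card : ℝ) ^ 2)) := by
        rw [← ENNReal.ofReal_pow (Real.exp_pos _).le, ← Real.exp_nat_mul]
        congr 1
        push_cast
        ring

private lemma chernoff {n : ℕ} {p : ℝ} (hp0 : 0 ≤ p) (hp1 : p ≤ 1) (X : Finset (Fin n))
    {t : ℝ} (ht : 0 ≤ t) :
    digraphMeasure n p {G | t < (arcsIn G X : ℝ)} ≤
      ENNReal.ofReal (Real.exp (2 * p * (X.card : ℝ) ^ 2 - t)) := by
  classical
  set E := ENNReal.ofReal (Real.exp 1) with hE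
  have hE1 : (1 : ENNReal) ≤ E := ENNReal.one_le_ofReal.2 (Real.one_le_exp zero_le_one)
  have key : ∀ G : Fin n → Fin n → Bool, t < (arcsIn G X : ℝ) →
      ENNReal.ofReal (Real.exp t) ≤ E ^ arcsIn G X := by
    intro G hG
    have h1 : E ^ (t : ℝ) ≤ E ^ ((arcsIn G X : ℕ) : ℝ) :=
      ENNReal.rpow_le_rpow_of_exponent_le hE1 hG.le
    rw [ENNReal.rpow_natCast] at h1
    calc ENNReal.ofReal (Real.exp t) = E ^ (t : ℝ) := by
          rw [hE, ENNReal.ofReal_rpow_of_pos (Real.exp_pos 1), Real.exp_one_rpow]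
      _ ≤ _ := h1
  have markov :
      (∑ G ∈ ({G | t < (arcsIn G X : ℝ)} : Set (Fin n → Fin n → Bool)).toFinite.toFinset,
          ∏ i, ∏ j, wgt p (G i j)) * ENNReal.ofReal (Real.exp t)
        ≤ ENNReal.ofReal (Real.exp (2 * p * (X.card : ℝ) ^ 2)) := by
    rw [Finset.sum_mul]
    calc ∑ G ∈ ({G | t < (arcsIn G X : ℝ)} : Set (Fin n → Fin n → Bool)).toFinite.toFinset,
          (∏ i, ∏ j, wgt p (G i j)) * ENNReal.ofReal (Real.exp t)
        ≤ ∑ G ∈ ({G | t < (arcsIn G X : ℝ)} : Set (Fin n → Fin n → Bool)).toFinite.toFinset,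
          (∏ i, ∏ j, wgt p (G i j)) * E ^ arcsIn G X := by
          refine Finset.sum_le_sum fun G hG => mul_le_mul_right (key G ?_) _
          simpa using (Set.Finite.mem_toFinset _).1 hG
      _ ≤ ∑ G : Fin n → Fin n → Bool, (∏ i, ∏ j, wgt p (G i j)) * E ^ arcsIn G X :=
          Finset.sum_le_sum_of_subset (Finset.subset_univ _)
      _ ≤ _ := mgf_le hp0 hp1 X
  rw [meas_apply hp1]
  have hne : ENNReal.ofReal (Real.exp t) ≠ 0 := by
    simp [ENNReal.ofReal_eq_zero, not_le, Real.exp_pos]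
  have h := (ENNReal.le_div_iff_mul_le (Or.inl hne) (Or.inl ENNReal.ofReal_ne_top)).2 markov
  calc (∑ G ∈ ({G | t < (arcsIn G X : ℝ)} : Set (Fin n → Fin n → Bool)).toFinite.toFinset,
        ∏ i, ∏ j, wgt p (G i j))
      ≤ ENNReal.ofReal (Real.exp (2 * p * (X.card : ℝ) ^ 2)) / ENNReal.ofReal (Real.exp t) := h
    _ = ENNReal.ofReal (Real.exp (2 * p * (X.card : ℝ) ^ 2 - t)) := by
        rw [← ENNReal.ofReal_div_of_pos (Real.exp_pos t), ← Real.exp_sub]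

private lemma log_ge_imp_one_le {n : ℕ} (hl : (59049 : ℝ) ≤ Real.log n) : 1 ≤ n := by
  by_contra h
  push_neg at h
  interval_cases n
  simp only [Nat.cast_zero, Real.log_zero] at hl
  norm_num at hl

private lemma badX_bound {n : ℕ} {p : ℝ} (hp0 : 0 < p) (hp1 : p ≤ 1)
    (hl : (59049 : ℝ) ≤ Real.log n) (X : Finset (Fin n)) (hX : X.Nonempty) :
    digraphMeasure n p {G | (X.card : ℝ) ≤ (Real.log n) ^ 2 / p ∧
        (X.card : ℝ) * (Real.log n) ^ (2.1 : ℝ) < (arcsIn G X : ℝ)}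
      ≤ ENNReal.ofReal (Real.exp (-(Real.log n) ^ 2 / 2)) *
          ENNReal.ofReal (1 / (n : ℝ)) ^ X.card := by
  classical
  set l := Real.log n with hldef
  have hl0 : (0 : ℝ) < l := lt_of_lt_of_le (by norm_num) hl
  have hn1 : 1 ≤ n := log_ge_imp_one_le hl
  have hnpos : (0 : ℝ) < n := by exact_mod_cast hn1
  by_cases hcard : (X.card : ℝ) ≤ l ^ 2 / p
  · have hk1 : (1 : ℝ) ≤ (X.card : ℝ) := by
      exact_mod_cast Finset.card_pos.2 hX
    have hpk : p * (X.card : ℝ) ≤ l ^ 2 := by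
      have h := (le_div_iff₀ hp0).1 hcard
      linarith
    have ht0 : 0 ≤ (X.card : ℝ) * l ^ (2.1 : ℝ) := by positivity
    refine le_trans (le_trans (measure_mono fun G hG => hG.2) (chernoff hp0.le hp1 X ht0)) ?_
    have hu : (3 : ℝ) ≤ l ^ (0.1 : ℝ) := by
      calc (3 : ℝ) = ((3 : ℝ) ^ (10 : ℕ)) ^ (0.1 : ℝ) := by
            rw [← Real.rpow_natCast (3 : ℝ) 10, ← Real.rpow_mul (by norm_num)]
            norm_num
        _ ≤ l ^ (0.1 : ℝ) := by
            apply Real.rpow_le_rpow (by positivity) _ (by norm_num)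
            norm_num
            linarith
    have hsplit : l ^ (2.1 : ℝ) = l ^ 2 * l ^ (0.1 : ℝ) := by
      rw [← Real.rpow_natCast l 2, ← Real.rpow_add hl0]
      norm_num
    have hexpo : 2 * p * (X.card : ℝ) ^ 2 - (X.card : ℝ) * l ^ (2.1 : ℝ)
        ≤ -l ^ 2 / 2 + (X.card : ℝ) * (-l) := by
      rw [hsplit]
      have hk0 : (0 : ℝ) ≤ (X.card : ℝ) := by linarith
      have h1 : p * (X.card : ℝ) * (X.card : ℝ) ≤ l ^ 2 * (X.card : ℝ) :=
        mul_le_mul_of_nonneg_right hpk hk0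
      have h2 : (X.card : ℝ) * l ^ 2 * 3 ≤ (X.card : ℝ) * l ^ 2 * (l ^ (0.1 : ℝ)) := by
        apply mul_le_mul_of_nonneg_left hu
        positivity
      nlinarith [sq_nonneg l,
        mul_le_mul_of_nonneg_right hl (by nlinarith : (0:ℝ) ≤ (X.card:ℝ) * l - (X.card:ℝ))]
    calc ENNReal.ofReal (Real.exp (2 * p * (X.card : ℝ) ^ 2 - (X.card : ℝ) * l ^ (2.1 : ℝ)))
        ≤ ENNReal.ofReal (Real.exp (-l ^ 2 / 2 + (X.card : ℝ) * (-l))) :=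
          ENNReal.ofReal_le_ofReal (Real.exp_le_exp.2 hexpo)
      _ = ENNReal.ofReal (Real.exp (-l ^ 2 / 2)) * ENNReal.ofReal (1 / (n : ℝ)) ^ X.card := by
          rw [Real.exp_add, ENNReal.ofReal_mul (Real.exp_pos _).le]
          congr 1
          rw [Real.exp_nat_mul, ENNReal.ofReal_pow (Real.exp_pos _).le]
          congr 2
          rw [Real.exp_neg, hldef, Real.exp_log hnpos, one_div]
  · have hempty : {G : Fin n → Fin n → Bool | (X.card : ℝ) ≤ l ^ 2 / p ∧
        (X.card : ℝ) * l ^ (2.1 : ℝ) < (arcsIn G X : ℝ)} = ∅ := by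
      ext G
      simp only [Set.mem_setOf_eq, Set.mem_empty_iff_false, iff_false, not_and]
      intro h
      exact absurd h hcard
    rw [hempty, measure_empty]
    exact zero_le

private lemma compl_bound {n : ℕ} {p : ℝ} (hp0 : 0 < p) (hp1 : p ≤ 1)
    (hl : (59049 : ℝ) ≤ Real.log n) :
    digraphMeasure n p {G | ∀ X : Finset (Fin n), (X.card : ℝ) ≤ (Real.log n) ^ 2 / p →
        (arcsIn G X : ℝ) ≤ (X.card : ℝ) * (Real.log n) ^ (2.1 : ℝ)}ᶜ
      ≤ ENNReal.ofReal (Real.exp 1 * Real.exp (-(Real.log n) ^ 2 / 2)) := by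
  classical
  have hn1 : 1 ≤ n := log_ge_imp_one_le hl
  set 𝒳 := (Finset.univ : Finset (Fin n)).powerset.filter
    (fun X : Finset (Fin n) => X.Nonempty) with h𝒳
  have hsub : {G : Fin n → Fin n → Bool |
        ∀ X : Finset (Fin n), (X.card : ℝ) ≤ (Real.log n) ^ 2 / p →
          (arcsIn G X : ℝ) ≤ (X.card : ℝ) * (Real.log n) ^ (2.1 : ℝ)}ᶜ
      ⊆ ⋃ X ∈ 𝒳, {G | (X.card : ℝ) ≤ (Real.log n) ^ 2 / p ∧
          (X.card : ℝ) * (Real.log n) ^ (2.1 : ℝ) < (arcsIn G X : ℝ)} := by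
    intro G hG
    simp only [Set.mem_compl_iff, Set.mem_setOf_eq, not_forall, not_le] at hG
    obtain ⟨X, h1, h2⟩ := hG
    have hXne : X.Nonempty := by
      rcases Finset.eq_empty_or_nonempty X with rfl | h
      · exfalso
        simp only [Finset.card_empty, Nat.cast_zero, zero_mul] at h2
        have harc : arcsIn G ∅ = 0 := by simp [arcsIn]
        rw [harc] at h2
        norm_num at h2
      · exact h
    have hmem : X ∈ 𝒳 := by simp [h𝒳, hXne]
    exact Set.mem_iUnion₂.2 ⟨X, hmem, h1, h2⟩
  refine le_trans (measure_mono hsub) (le_trans (measure_biUnion_finset_le _ _) ?_)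
  calc ∑ X ∈ 𝒳, digraphMeasure n p {G | (X.card : ℝ) ≤ (Real.log n) ^ 2 / p ∧
          (X.card : ℝ) * (Real.log n) ^ (2.1 : ℝ) < (arcsIn G X : ℝ)}
      ≤ ∑ X ∈ 𝒳, ENNReal.ofReal (Real.exp (-(Real.log n) ^ 2 / 2)) *
          ENNReal.ofReal (1 / (n : ℝ)) ^ X.card := by
        refine Finset.sum_le_sum fun X hX => ?_
        exact badX_bound hp0 hp1 hl X (Finset.mem_filter.1 hX).2
    _ ≤ ∑ X ∈ (Finset.univ : Finset (Fin n)).powerset,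
          ENNReal.ofReal (Real.exp (-(Real.log n) ^ 2 / 2)) *
          ENNReal.ofReal (1 / (n : ℝ)) ^ X.card :=
        Finset.sum_le_sum_of_subset (Finset.filter_subset _ _)
    _ = ENNReal.ofReal (Real.exp (-(Real.log n) ^ 2 / 2)) *
          ∑ X ∈ (Finset.univ : Finset (Fin n)).powerset,
            ENNReal.ofReal (1 / (n : ℝ)) ^ X.card := by rw [← Finset.mul_sum]
    _ ≤ ENNReal.ofReal (Real.exp (-(Real.log n) ^ 2 / 2)) * ENNReal.ofReal (Real.exp 1) := by
        apply mul_le_mul_right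
        have hps : ∑ X ∈ (Finset.univ : Finset (Fin n)).powerset,
            ENNReal.ofReal (1 / (n : ℝ)) ^ X.card
            = (ENNReal.ofReal (1 / (n : ℝ)) + 1) ^ n := by
          have h := Finset.prod_add (fun _ : Fin n => ENNReal.ofReal (1 / (n : ℝ)))
            (fun _ : Fin n => (1 : ENNReal)) Finset.univ
          simp only [Finset.prod_const, Finset.card_univ, Fintype.card_fin, one_pow, mul_one] at h
          rw [h]
        rw [hps]
        have hadd : ENNReal.ofReal (1 / (n : ℝ)) + 1 = ENNReal.ofReal (1 / (n : ℝ) + 1) := by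
          rw [ENNReal.ofReal_add (by positivity) zero_le_one, ENNReal.ofReal_one]
        rw [hadd, ← ENNReal.ofReal_pow (by positivity)]
        apply ENNReal.ofReal_le_ofReal
        have hnpos : (0 : ℝ) < n := by exact_mod_cast hn1
        calc (1 / (n : ℝ) + 1) ^ n ≤ (Real.exp (1 / (n : ℝ))) ^ n := by
              apply pow_le_pow_left₀ (by positivity)
              exact Real.add_one_le_exp _
          _ = Real.exp ((n : ℝ) * (1 / (n : ℝ))) := (Real.exp_nat_mul _ n).symm
          _ = Real.exp 1 := by
              congr 1
              field_simp
    _ = ENNReal.ofReal (Real.exp 1 * Real.exp (-(Real.log n) ^ 2 / 2)) := by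
        rw [← ENNReal.ofReal_mul (Real.exp_pos _).le, mul_comm]

end Aux

/-- W.h.p., in `G ~ D(n,p)` with `p = ω(log^8 n / n)`, every set `X` of size at
most `log^2 n / p` spans at most `|X| log^{2.1} n` arcs. -/
theorem stmt_6 (p : ℕ → ℝ) (hp : ∀ n, 0 < p n ∧ p n ≤ 1)
    (hω : Tendsto (fun n : ℕ => p n * n / (Real.log n) ^ 8) atTop atTop) :
    Tendsto (fun n : ℕ => digraphMeasure n (p n)
        {G | ∀ X : Finset (Fin n), (X.card : ℝ) ≤ (Real.log n) ^ 2 / p n →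
          (arcsIn G X : ℝ) ≤ (X.card : ℝ) * (Real.log n) ^ (2.1 : ℝ)})
      atTop (nhds 1) := by
  classical
  have hmeas : ∀ (n : ℕ) (s : Set (Fin n → Fin n → Bool)), MeasurableSet s :=
    fun n s => (Set.toFinite s).measurableSet
  have hprob : ∀ n, IsProbabilityMeasure (digraphMeasure n (p n)) := fun n => by
    rw [digraphMeasure]
    infer_instance
  have hlog : Tendsto (fun n : ℕ => Real.log n) atTop atTop :=
    Real.tendsto_log_atTop.comp tendsto_natCast_atTop_atTop
  have hbad : Tendsto (fun n : ℕ => digraphMeasure n (p n)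
      {G | ∀ X : Finset (Fin n), (X.card : ℝ) ≤ (Real.log n) ^ 2 / p n →
        (arcsIn G X : ℝ) ≤ (X.card : ℝ) * (Real.log n) ^ (2.1 : ℝ)}ᶜ)
      atTop (nhds 0) := by
    have hsq : Tendsto (fun n : ℕ => (Real.log n) ^ 2) atTop atTop := by
      have := hlog.atTop_mul_atTop₀ hlog
      simpa [pow_two] using this
    have hb : Tendsto (fun n : ℕ => -(Real.log n) ^ 2 / 2) atTop atBot := by
      simp only [neg_div]
      exact tendsto_neg_atTop_atBot.comp (hsq.atTop_div_const (by norm_num))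
    have hexp : Tendsto (fun n : ℕ => Real.exp (-(Real.log n) ^ 2 / 2)) atTop (nhds 0) :=
      Real.tendsto_exp_atBot.comp hb
    have hupper : Tendsto (fun n : ℕ =>
        ENNReal.ofReal (Real.exp 1 * Real.exp (-(Real.log n) ^ 2 / 2))) atTop (nhds 0) := by
      have hmul : Tendsto (fun n : ℕ => Real.exp 1 * Real.exp (-(Real.log n) ^ 2 / 2))
          atTop (nhds 0) := by
        have := hexp.const_mul (Real.exp 1)
        simpa using this
      have := ENNReal.tendsto_ofReal hmul
      simpa using this
    refine tendsto_of_tendsto_of_tendsto_of_le_of_le' tendsto_const_nhds hupper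
      (Eventually.of_forall fun n => zero_le) ?_
    filter_upwards [hlog.eventually_ge_atTop 59049] with n hn
    exact compl_bound (hp n).1 (hp n).2 hn
  have heq : ∀ n : ℕ, digraphMeasure n (p n)
      {G | ∀ X : Finset (Fin n), (X.card : ℝ) ≤ (Real.log n) ^ 2 / p n →
        (arcsIn G X : ℝ) ≤ (X.card : ℝ) * (Real.log n) ^ (2.1 : ℝ)}
      = 1 - digraphMeasure n (p n)
      {G | ∀ X : Finset (Fin n), (X.card : ℝ) ≤ (Real.log n) ^ 2 / p n →
        (arcsIn G X : ℝ) ≤ (X.card : ℝ) * (Real.log n) ^ (2.1 : ℝ)}ᶜ := by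
    intro n
    haveI := hprob n
    conv_lhs => rw [← compl_compl {G : Fin n → Fin n → Bool |
      ∀ X : Finset (Fin n), (X.card : ℝ) ≤ (Real.log n) ^ 2 / p n →
        (arcsIn G X : ℝ) ≤ (X.card : ℝ) * (Real.log n) ^ (2.1 : ℝ)}]
    exact prob_compl_eq_one_sub (hmeas n _)
  simp_rw [heq]
  have hcont : Tendsto (fun x : ENNReal => 1 - x) (nhds 0) (nhds (1 - 0)) :=
    (ENNReal.continuous_sub_left ENNReal.one_ne_top).continuousAt
  have := hcont.comp hbad
  simpa [Function.comp_def] using this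
end

section
/- Let D be a digraph, i < ℓ integers, σ ∈ {+,−}^ℓ, and suppose Y satisfies: |Y| ≥ (6ℓ/γ)⌈(log n)^2/p⌉ and for every S ⊆ Y with |S| ≥ (log n)^2/p, |N^+(S,Y)|, |N^−(S,Y)| ≥ (1/2+γ)|Y|. If A ⊆ X satisfies |N^{σ^i}(A,Y)| ≥ 2(log n)^2/p, then there exists A' ⊆ A with |A'| ≤ ⌈|A|/2⌉ and |N^{σ^{i+1}}(A',Y)| ≥ 2(log n)^2/p. -/
open Filter


/-- A `σ`-walk: all vertices distinct except possibly first = last, following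
out-arcs at `+` (true) steps and in-arcs at `-` (false) steps. -/
def IsSigmaWalk {n ℓ : ℕ} (D : Fin n → Fin n → Bool) (σ : Fin ℓ → Bool)
    (f : Fin (ℓ+1) → Fin n) : Prop :=
  (∀ i : Fin ℓ, if σ i then D (f i.castSucc) (f i.succ) = true
    else D (f i.succ) (f i.castSucc) = true) ∧
  (∀ i j : Fin (ℓ+1), f i = f j →
    i = j ∨ (i = 0 ∧ j = Fin.last ℓ) ∨ (i = Fin.last ℓ ∧ j = 0))

/-- `N^σ(A, B)`: vertices of `B` reachable from some vertex of `A` by a `σ`-walk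
all of whose vertices other than the first lie in `B`. -/
def sigmaNbhd {n ℓ : ℕ} (D : Fin n → Fin n → Bool) (σ : Fin ℓ → Bool)
    (A B : Set (Fin n)) : Set (Fin n) :=
  {y | y ∈ B ∧ ∃ f : Fin (ℓ+1) → Fin n, IsSigmaWalk D σ f ∧ f 0 ∈ A ∧
    f (Fin.last ℓ) = y ∧ ∀ i : Fin (ℓ+1), i ≠ 0 → f i ∈ B}

lemma sigmaNbhd_union {n ℓ : ℕ} (D : Fin n → Fin n → Bool) (σ : Fin ℓ → Bool)
    (A A' B : Set (Fin n)) :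
    sigmaNbhd D σ (A ∪ A') B = sigmaNbhd D σ A B ∪ sigmaNbhd D σ A' B := by
  ext y
  constructor
  · rintro ⟨hyB, f, hf, (h | h), hfl, hfB⟩
    · exact Or.inl ⟨hyB, f, hf, h, hfl, hfB⟩
    · exact Or.inr ⟨hyB, f, hf, h, hfl, hfB⟩
  · rintro (⟨hyB, f, hf, hf0, hfl, hfB⟩ | ⟨hyB, f, hf, hf0, hfl, hfB⟩)
    · exact ⟨hyB, f, hf, Or.inl hf0, hfl, hfB⟩
    · exact ⟨hyB, f, hf, Or.inr hf0, hfl, hfB⟩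

lemma key_step (n : ℕ) (p γ : ℝ) (hp : 0 < p) (hγ0 : 0 < γ)
    (ℓ i : ℕ) (hi : i < ℓ)
    (σi : Fin i → Bool) (σs : Fin (i+1) → Bool)
    (hcomp : ∀ j : Fin i, σs j.castSucc = σi j)
    (D : Fin n → Fin n → Bool) (X Y A' : Finset (Fin n))
    (hA : A' ⊆ X) (hXY : Disjoint X Y)
    (hY : (6 * ℓ / γ) * (⌈(Real.log n) ^ 2 / p⌉₊ : ℝ) ≤ (Y.card : ℝ))
    (hexp : ∀ S ⊆ Y, (Real.log n) ^ 2 / p ≤ (S.card : ℝ) →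
      (1/2 + γ) * Y.card ≤ ((Y.filter fun y => ∃ x ∈ S, D x y = true).card : ℝ) ∧
      (1/2 + γ) * Y.card ≤ ((Y.filter fun y => ∃ x ∈ S, D y x = true).card : ℝ))
    (hN : (Real.log n) ^ 2 / p ≤ ((sigmaNbhd D σi (↑A' : Set (Fin n)) ↑Y).ncard : ℝ)) :
    2 * (Real.log n) ^ 2 / p ≤
      ((sigmaNbhd D σs (↑A' : Set (Fin n)) ↑Y).ncard : ℝ) := by
  classical
  set c := (Real.log n) ^ 2 / p with hc
  have hc0 : 0 ≤ c := div_nonneg (sq_nonneg _) hp.le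
  set m := ⌈c⌉₊ with hm
  set T := sigmaNbhd D σi (↑A' : Set (Fin n)) ↑Y with hTdef
  have hTfin : T.Finite := Set.toFinite T
  have hTm : m ≤ hTfin.toFinset.card := by
    rw [← Set.ncard_eq_toFinset_card T hTfin]
    exact Nat.ceil_le.mpr hN
  obtain ⟨S, hST, hScard⟩ := Finset.exists_subset_card_eq hTm
  have hSmem : ∀ x ∈ S, x ∈ T := fun x hx => hTfin.mem_toFinset.mp (hST hx)
  have hSY : S ⊆ Y := fun x hx => (hSmem x hx).1
  have hScard' : c ≤ (S.card : ℝ) := by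
    rw [hScard]; exact_mod_cast Nat.le_ceil c
  have hwalk : ∀ x ∈ S, ∃ f : Fin (i+1) → Fin n, IsSigmaWalk D σi f ∧
      f 0 ∈ (↑A' : Set (Fin n)) ∧ f (Fin.last i) = x ∧
      ∀ k : Fin (i+1), k ≠ 0 → f k ∈ (↑Y : Set (Fin n)) :=
    fun x hx => (hSmem x hx).2
  choose! w hw using hwalk
  set B : Finset (Fin n) := S.biUnion (fun x => Finset.image (w x) Finset.univ) with hBdef
  have hBcard : B.card ≤ m * (i+1) := by
    calc B.card ≤ ∑ x ∈ S, (Finset.image (w x) Finset.univ).card :=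
          Finset.card_biUnion_le
      _ ≤ ∑ x ∈ S, (i+1) := Finset.sum_le_sum (fun x _ => by
          exact (Finset.card_image_le).trans (by simp))
      _ = m * (i+1) := by rw [Finset.sum_const, hScard, smul_eq_mul]
  set E : Fin n → Fin n → Bool :=
    fun u v => if σs (Fin.last i) = true then D u v else D v u with hEdef
  set F : Finset (Fin n) := Y.filter (fun y => ∃ x ∈ S, E x y = true) with hFdef
  have hF : (1/2 + γ) * Y.card ≤ (F.card : ℝ) := by
    cases hb : σs (Fin.last i) with
    | false =>
        have he : F = Y.filter (fun y => ∃ x ∈ S, D y x = true) := by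
          rw [hFdef]
          exact Finset.filter_congr (by intro y _; simp [hEdef, hb])
        rw [he]; exact (hexp S hSY hScard').2
    | true =>
        have he : F = Y.filter (fun y => ∃ x ∈ S, D x y = true) := by
          rw [hFdef]
          exact Finset.filter_congr (by intro y _; simp [hEdef, hb])
        rw [he]; exact (hexp S hSY hScard').1
  have hincl : ∀ y ∈ F \ B, y ∈ sigmaNbhd D σs (↑A' : Set (Fin n)) ↑Y := by
    intro y hy
    rw [Finset.mem_sdiff] at hy
    obtain ⟨hyF, hyB⟩ := hy
    rw [hFdef, Finset.mem_filter] at hyF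
    obtain ⟨hyY, x, hxS, hxy⟩ := hyF
    obtain ⟨hwalkx, hw0, hwl, hwY⟩ := hw x hxS
    have hynotw : ∀ k, w x k ≠ y := by
      intro k hk
      exact hyB (Finset.mem_biUnion.mpr ⟨x, hxS,
        Finset.mem_image.mpr ⟨k, Finset.mem_univ k, hk⟩⟩)
    have hw0X : w x 0 ∈ X := hA hw0
    have hw0ne : w x 0 ≠ w x (Fin.last i) := by
      intro h
      have hxY : w x (Fin.last i) ∈ Y := by rw [hwl]; exact hSY hxS
      exact (Finset.disjoint_left.mp hXY hw0X) (h ▸ hxY)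
    have hwinj : Function.Injective (w x) := by
      intro a b hab
      rcases hwalkx.2 a b hab with h | ⟨h0, hl⟩ | ⟨hl, h0⟩
      · exact h
      · exact absurd (h0 ▸ hl ▸ hab) hw0ne
      · exact absurd (h0 ▸ hl ▸ hab).symm hw0ne
    set g : Fin (i+1+1) → Fin n := Fin.snoc (w x) y with hgdef
    have hgc : ∀ k : Fin (i+1), g k.castSucc = w x k := fun k => by
      simp [hgdef]
    have hgl : g (Fin.last (i+1)) = y := by simp [hgdef]
    refine ⟨hyY, g, ⟨?_, ?_⟩, ?_, ?_, ?_⟩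
    · intro j
      induction j using Fin.lastCases with
      | last =>
          have h1 : g ((Fin.last i).castSucc) = x := by rw [hgc, hwl]
          have h2 : g ((Fin.last i).succ) = y := by rw [Fin.succ_last, hgl]
          cases hb : σs (Fin.last i) with
          | false =>
              simp only [hb, if_false, Bool.false_eq_true]
              rw [h1, h2]
              simpa [hEdef, hb] using hxy
          | true =>
              simp only [hb, if_true]
              rw [h1, h2]
              simpa [hEdef, hb] using hxy
      | cast j' =>
          have harc := hwalkx.1 j'
          have h1 : g ((j'.castSucc).castSucc) = w x j'.castSucc := hgc _
          have h2 : g ((j'.castSucc).succ) = w x j'.succ := by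
            rw [Fin.succ_castSucc, hgc]
          rw [hcomp j']
          cases hσ : σi j' with
          | false =>
              simp only [hσ, if_false, Bool.false_eq_true] at harc ⊢
              rw [h1, h2]; exact harc
          | true =>
              simp only [hσ, if_true] at harc ⊢
              rw [h1, h2]; exact harc
    · have hg : Function.Injective g := by
        intro a b hab
        induction a using Fin.lastCases with
        | last =>
            induction b using Fin.lastCases with
            | last => rfl
            | cast b' =>
                rw [hgl, hgc] at hab
                exact absurd hab.symm (hynotw b')
        | cast a' =>
            induction b using Fin.lastCases with
            | last =>
                rw [hgl, hgc] at hab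
                exact absurd hab (hynotw a')
            | cast b' =>
                rw [hgc, hgc] at hab
                exact congrArg Fin.castSucc (hwinj hab)
      exact fun a b hab => Or.inl (hg hab)
    · have h0 : g (0 : Fin (i+1+1)) = w x 0 := by
        rw [← Fin.castSucc_zero, hgc]
      rw [h0]; exact hw0
    · exact hgl
    · intro k hk
      induction k using Fin.lastCases with
      | last => rw [hgl]; exact hyY
      | cast k' =>
          rw [hgc]
          refine hwY k' ?_
          intro h
          exact hk (by rw [h, Fin.castSucc_zero])
  have h1 : ((F \ B).card : ℝ) ≤ ((sigmaNbhd D σs (↑A' : Set (Fin n)) ↑Y).ncard : ℝ) := by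
    have hsub : ((F \ B : Finset (Fin n)) : Set (Fin n)) ⊆
        sigmaNbhd D σs (↑A' : Set (Fin n)) ↑Y := fun y hy => hincl y (by exact_mod_cast hy)
    have := Set.ncard_le_ncard hsub (Set.toFinite _)
    rw [Set.ncard_coe_finset] at this
    exact_mod_cast this
  have h2 : (F.card : ℝ) - B.card ≤ ((F \ B).card : ℝ) := by
    have := Finset.card_le_card_sdiff_add_card (s := F) (t := B)
    have := (Nat.cast_le (α := ℝ)).mpr this
    push_cast at this
    linarith
  have hBR : (B.card : ℝ) ≤ (m : ℝ) * (i + 1) := by exact_mod_cast hBcard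
  have hY6 : 6 * (ℓ : ℝ) * m ≤ Y.card * γ := by
    rw [div_mul_eq_mul_div, div_le_iff₀ hγ0] at hY
    linarith
  have hcm : c ≤ (m : ℝ) := Nat.le_ceil c
  have hil : (i : ℝ) + 1 ≤ (ℓ : ℝ) := by exact_mod_cast hi
  have hm0 : (0:ℝ) ≤ m := Nat.cast_nonneg m
  have hY0 : (0:ℝ) ≤ Y.card := Nat.cast_nonneg _
  have hp1 : ((i:ℝ)+1) * m ≤ (ℓ:ℝ) * m := mul_le_mul_of_nonneg_right hil hm0
  have hl1 : (1:ℝ) ≤ (ℓ:ℝ) := by exact_mod_cast Nat.one_le_iff_ne_zero.mpr (by omega)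
  have hlm : (m:ℝ) ≤ (ℓ:ℝ) * m := le_mul_of_one_le_left hm0 hl1
  have hgoal : 2 * (Real.log n) ^ 2 / p = 2 * c := by rw [hc]; ring
  rw [hgoal]
  nlinarith [hF, h1, h2, hBR]

/-- Claim 4.3: if `A` has a large `σ^i`-neighbourhood in `Y`, then some half-size
subset `A' ⊆ A` has a large `σ^{i+1}`-neighbourhood in `Y`. -/
theorem stmt_10 (n : ℕ) (p γ : ℝ) (hp : 0 < p) (hγ0 : 0 < γ) (hγ1 : γ < 1)
    (ℓ i : ℕ) (hi : i < ℓ) (σ : Fin ℓ → Bool)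
    (D : Fin n → Fin n → Bool) (X Y A : Finset (Fin n))
    (hA : A ⊆ X) (hXY : Disjoint X Y)
    (hY : (6 * ℓ / γ) * (⌈(Real.log n) ^ 2 / p⌉₊ : ℝ) ≤ (Y.card : ℝ))
    (hexp : ∀ S ⊆ Y, (Real.log n) ^ 2 / p ≤ (S.card : ℝ) →
      (1/2 + γ) * Y.card ≤ ((Y.filter fun y => ∃ x ∈ S, D x y = true).card : ℝ) ∧
      (1/2 + γ) * Y.card ≤ ((Y.filter fun y => ∃ x ∈ S, D y x = true).card : ℝ))
    (hAN : 2 * (Real.log n) ^ 2 / p ≤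
      ((sigmaNbhd D (fun j : Fin i => σ (Fin.castLE hi.le j)) ↑A ↑Y).ncard : ℝ)) :
    ∃ A' ⊆ A, A'.card ≤ (A.card + 1) / 2 ∧
      2 * (Real.log n) ^ 2 / p ≤
        ((sigmaNbhd D (fun j : Fin (i+1) => σ (Fin.castLE hi j)) ↑A' ↑Y).ncard : ℝ) := by
  classical
  set σi : Fin i → Bool := fun j => σ (Fin.castLE hi.le j) with hσi
  set σs : Fin (i+1) → Bool := fun j => σ (Fin.castLE hi j) with hσs
  have hcomp : ∀ j : Fin i, σs j.castSucc = σi j := fun j => rfl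
  obtain ⟨A1, hA1A, hA1card⟩ :=
    Finset.exists_subset_card_eq (Nat.div_le_self A.card 2)
  set A2 : Finset (Fin n) := A \ A1 with hA2def
  have hA2A : A2 ⊆ A := Finset.sdiff_subset
  have hA2card : A2.card = A.card - A.card / 2 := by
    rw [hA2def, Finset.card_sdiff_of_subset hA1A, hA1card]
  have hunion : (↑A : Set (Fin n)) = ↑A1 ∪ ↑A2 := by
    rw [← Finset.coe_union, Finset.union_sdiff_of_subset hA1A]
  have hsplit := sigmaNbhd_union D σi (↑A1 : Set (Fin n)) ↑A2 ↑Y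
  have hle : ((sigmaNbhd D σi (↑A : Set (Fin n)) ↑Y).ncard : ℝ) ≤
      ((sigmaNbhd D σi (↑A1 : Set (Fin n)) ↑Y).ncard : ℝ) +
      ((sigmaNbhd D σi (↑A2 : Set (Fin n)) ↑Y).ncard : ℝ) := by
    rw [hunion, hsplit]
    exact_mod_cast Set.ncard_union_le _ _
  set c := (Real.log n) ^ 2 / p with hc
  have hAN' : 2 * c ≤ ((sigmaNbhd D σi (↑A : Set (Fin n)) ↑Y).ncard : ℝ) := by
    rw [hc]; rw [show 2 * ((Real.log n) ^ 2 / p) = 2 * (Real.log n) ^ 2 / p by ring]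
    exact hAN
  have hcase : c ≤ ((sigmaNbhd D σi (↑A1 : Set (Fin n)) ↑Y).ncard : ℝ) ∨
      c ≤ ((sigmaNbhd D σi (↑A2 : Set (Fin n)) ↑Y).ncard : ℝ) := by
    by_contra h
    push_neg at h
    linarith [h.1, h.2]
  rcases hcase with h | h
  · refine ⟨A1, hA1A, by omega, ?_⟩
    exact key_step n p γ hp hγ0 ℓ i hi σi σs hcomp D X Y A1
      (hA1A.trans hA) hXY hY hexp (by rw [← hc]; exact h)
  · refine ⟨A2, hA2A, by omega, ?_⟩
    exact key_step n p γ hp hγ0 ℓ i hi σi σs hcomp D X Y A2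
      (hA2A.trans hA) hXY hY hexp (by rw [← hc]; exact h)
end
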